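/- For all s, t ≥ 3, every doubly saturated R(s,t)-good graph has at least 2s + 2t − 7 vertices. -/

import Mathlib

/-- The cyclic distance ‖x‖ = min(x mod n, n − (x mod n)) for x ∈ ℤ/nℤ. -/
def cyclicDist (n : ℕ) (x : ZMod n) : ℕ := min x.val (n - x.val)

/-- The circulant graph on `ZMod n` with distance set `S`: `x ~ y` iff `‖x - y‖ ∈ S`. -/
def circ (n : ℕ) (S : Set ℕ) : SimpleGraph (ZMod n) :=
  SimpleGraph.fromRel (fun x y => cyclicDist n (x - y) ∈ S)

/-- `G` is `R(s,t)`-good: no clique of size `s` and no independent set of size `t`. -/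
def RGood {V : Type*} (s t : ℕ) (G : SimpleGraph V) : Prop :=
  G.CliqueFree s ∧ Gᶜ.CliqueFree t

/-- `G` is doubly saturated `R(s,t)`-good. -/
def DoublySaturated {V : Type*} (s t : ℕ) (G : SimpleGraph V) : Prop :=
  RGood s t G ∧
  (∀ u v : V, u ≠ v → ¬ G.Adj u v → ¬ (G ⊔ SimpleGraph.edge u v).CliqueFree s) ∧
  (∀ u v : V, G.Adj u v → ¬ ((G.deleteEdges {s(u, v)})ᶜ.CliqueFree t)) ∧
  G ≠ ⊤ ∧ Gᶜ ≠ ⊤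

namespace DSProof

open Finset

variable {V : Type*} [Fintype V] [DecidableEq V]

/-- `S` is an independent set of `G` (as a `Finset`). -/
def Indep (G : SimpleGraph V) (S : Finset V) : Prop :=
  ∀ ⦃x⦄, x ∈ S → ∀ ⦃y⦄, y ∈ S → x ≠ y → ¬ G.Adj x y

/-- The key counting lemma (a Hajnal-type intersection/union estimate): given, for each `u` in
a nonempty set `N`, a `b`-element independent set `F u` of non-neighbours of `v`, and knowing
every independent set of non-neighbours of `v` has at most `b` elements, the intersection and
the union of the `F u` together have at least `2b` elements. -/
lemma key_count (G : SimpleGraph V) (b : ℕ) (v : V) (F : V → Finset V)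
    (hB : ∀ S : Finset V, Indep G S → (∀ w ∈ S, ¬ G.Adj v w ∧ w ≠ v) → S.card ≤ b)
    (N : Finset V) :
    N.Nonempty → (∀ u ∈ N, (F u).card = b ∧ Indep G (F u) ∧
      (∀ w ∈ F u, ¬ G.Adj v w ∧ w ≠ v ∧ ¬ G.Adj u w)) →
    2 * b ≤ (N.inf F).card + (N.sup F).card := by
  classical
  induction N using Finset.induction_on with
  | empty => intro h; exact absurd h (by simp)
  | @insert u N₀ hu ih =>
    intro _ hF
    have hFu := hF u (mem_insert_self u N₀)
    rcases N₀.eq_empty_or_nonempty with h0 | h0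
    · subst h0
      simp only [Finset.inf_insert, Finset.sup_insert, Finset.inf_empty, Finset.sup_empty,
        inf_top_eq, sup_bot_eq]
      rw [hFu.1]
      omega
    · have ih' := ih h0 (fun u' hu' => hF u' (mem_insert_of_mem hu'))
      obtain ⟨u₁, hu₁⟩ := h0
      set S : Finset V := F u with hSdef
      set I : Finset V := N₀.inf F with hIdef
      set U : Finset V := N₀.sup F with hUdef
      have hIsub : ∀ u' ∈ N₀, I ⊆ F u' := fun u' hu' => Finset.le_iff_subset.mp (Finset.inf_le hu')
      have hImem : ∀ x ∈ I, ¬ G.Adj v x ∧ x ≠ v := by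
        intro x hx
        have := (hF u₁ (mem_insert_of_mem hu₁)).2.2 x (hIsub u₁ hu₁ hx)
        exact ⟨this.1, this.2.1⟩
      have hIind : Indep G I := by
        intro x hx y hy hxy
        exact (hF u₁ (mem_insert_of_mem hu₁)).2.1 (hIsub u₁ hu₁ hx) (hIsub u₁ hu₁ hy) hxy
      -- the set of vertices of S adjacent to something in I \ S
      set Y : Finset V := S.filter (fun y => ∃ x ∈ I \ S, G.Adj x y) with hYdef
      have hYS : Y ⊆ S := filter_subset _ _
      -- Y is disjoint from U
      have hYU : ∀ y ∈ Y, y ∉ U := by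
        intro y hy hyU
        obtain ⟨hyS, x, hxIS, hadj⟩ := by
          simpa only [hYdef, mem_filter] using hy
        obtain ⟨u', hu', hyF⟩ := Finset.mem_sup.mp hyU
        have hxF : x ∈ F u' := hIsub u' hu' (mem_sdiff.mp hxIS).1
        exact (hF u' (mem_insert_of_mem hu')).2.1 hxF hyF (G.ne_of_adj hadj) hadj
      -- |I \ S| ≤ |Y|
      have hIY : (I \ S).card ≤ Y.card := by
        have hdisj : Disjoint (S \ Y) (I \ S) := by
          refine disjoint_left.mpr ?_
          intro w hw1 hw2
          exact (mem_sdiff.mp hw2).2 (mem_sdiff.mp hw1).1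
        have hind : Indep G ((S \ Y) ∪ (I \ S)) := by
          intro x hx y hy hxy hadj
          rcases mem_union.mp hx with hx' | hx' <;> rcases mem_union.mp hy with hy' | hy'
          · exact (hFu.2.1) (mem_sdiff.mp hx').1 (mem_sdiff.mp hy').1 hxy hadj
          · apply (mem_sdiff.mp hx').2
            rw [hYdef, mem_filter]
            exact ⟨(mem_sdiff.mp hx').1, y, hy', hadj.symm⟩
          · apply (mem_sdiff.mp hy').2
            rw [hYdef, mem_filter]
            exact ⟨(mem_sdiff.mp hy').1, x, hx', hadj⟩
          · exact hIind (mem_sdiff.mp hx').1 (mem_sdiff.mp hy').1 hxy hadj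
        have hmem : ∀ w ∈ (S \ Y) ∪ (I \ S), ¬ G.Adj v w ∧ w ≠ v := by
          intro w hw
          rcases mem_union.mp hw with hw' | hw'
          · have := hFu.2.2 w (mem_sdiff.mp hw').1
            exact ⟨this.1, this.2.1⟩
          · exact hImem w (mem_sdiff.mp hw').1
        have hcard := hB _ hind hmem
        rw [card_union_of_disjoint hdisj] at hcard
        have h1 : (S \ Y).card + Y.card = S.card := card_sdiff_add_card_eq_card hYS
        have h1' : S.card = b := hFu.1
        omega
      have hYSU : Y ⊆ S \ U := fun y hy => mem_sdiff.mpr ⟨hYS hy, hYU y hy⟩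
      have h2 : (I \ S).card ≤ (S \ U).card := le_trans hIY (card_le_card hYSU)
      -- assemble
      have e1 : (I ∩ S).card + (I \ S).card = I.card := card_inter_add_card_sdiff I S
      have e2 : (S \ U).card + U.card = (S ∪ U).card := card_sdiff_add_card S U
      rw [Finset.inf_insert, Finset.sup_insert]
      rw [inf_eq_inter, sup_eq_union, ← hSdef, ← hIdef, ← hUdef]
      have e3 : S ∩ I = I ∩ S := inter_comm S I
      rw [e3]
      omega

/-- The main codegree bound: under the stated saturation-type hypotheses, vertex `v` has at
least `2b` non-neighbours. -/
lemma codeg_bound (G : SimpleGraph V) (b : ℕ) (v : V)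
    (hW : ∀ x y : V, G.Adj x y → ∃ W : Finset V, W.card = b ∧ Indep G W ∧
      ∀ w ∈ W, ¬ G.Adj x w ∧ ¬ G.Adj y w ∧ w ≠ x ∧ w ≠ y)
    (hC : ∀ x y : V, x ≠ y → ¬ G.Adj x y → ∃ c, G.Adj x c ∧ G.Adj y c)
    (hB : ∀ S : Finset V, Indep G S → (∀ w ∈ S, ¬ G.Adj v w ∧ w ≠ v) → S.card ≤ b)
    (hd : ∃ u, G.Adj v u) (M : Finset V) (hM : ∀ w, w ∈ M ↔ (¬ G.Adj v w ∧ w ≠ v)) :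
    2 * b ≤ M.card := by
  classical
  obtain ⟨u₀, hu₀⟩ := hd
  choose! Wf hW1 hW2 hW3 using hW
  set F : V → Finset V := fun u => Wf v u with hFdef
  set N : Finset V := univ.filter (fun u => G.Adj v u) with hNdef
  have hu₀N : u₀ ∈ N := by simp [hNdef, hu₀]
  have hNadj : ∀ u ∈ N, G.Adj v u := by
    intro u hun
    simpa [hNdef] using hun
  have hF : ∀ u ∈ N, (F u).card = b ∧ Indep G (F u) ∧
      (∀ w ∈ F u, ¬ G.Adj v w ∧ w ≠ v ∧ ¬ G.Adj u w) := by
    intro u hun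
    have hadj := hNadj u hun
    refine ⟨hW1 v u hadj, hW2 v u hadj, ?_⟩
    intro w hw
    obtain ⟨h1, h2, h3, h4⟩ := hW3 v u hadj w hw
    exact ⟨h1, h3, h2⟩
  have hkey := key_count G b v F hB N ⟨u₀, hu₀N⟩ hF
  -- the intersection must be empty
  have hIempty : N.inf F = ∅ := by
    by_contra hne
    obtain ⟨x, hx⟩ := nonempty_iff_ne_empty.mpr hne
    have hxall : ∀ u ∈ N, x ∈ F u := fun u hun => Finset.le_iff_subset.mp (Finset.inf_le hun) hx
    have hx0 := hW3 v u₀ hu₀ x (hxall u₀ hu₀N)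
    obtain ⟨c, hvc, hxc⟩ := hC v x (Ne.symm hx0.2.2.1) hx0.1
    have hcN : c ∈ N := by simp [hNdef, hvc]
    have := (hW3 v c (hNadj c hcN) x (hxall c hcN)).2.1
    exact this hxc.symm
  rw [hIempty, card_empty] at hkey
  refine le_trans (show 2 * b ≤ (N.sup F).card by omega) (card_le_card ?_)
  intro w hw
  obtain ⟨u, hun, hwF⟩ := Finset.mem_sup.mp hw
  have := (hF u hun).2.2 w hwF
  exact (hM w).mpr ⟨this.1, this.2.1⟩

end DSProof

theorem stmt_5 (s t : ℕ) (hs : 3 ≤ s) (ht : 3 ≤ t)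
    {V : Type*} [Fintype V] (G : SimpleGraph V)
    (hG : DoublySaturated s t G) :
    2 * s + 2 * t - 7 ≤ Fintype.card V := by
  classical
  obtain ⟨⟨hKs, hKt⟩, hadd, hdel, hGtop, hGctop⟩ := hG
  -- V is nontrivial
  have hnt : ∃ x y : V, x ≠ y := by
    by_contra h
    push_neg at h
    apply hGtop
    ext x y
    simp only [SimpleGraph.top_adj]
    exact ⟨fun ha => G.ne_of_adj ha, fun hxy => absurd (h x y) hxy⟩
  obtain ⟨x₀, y₀, hx₀y₀⟩ := hnt
  -- Extraction from the edge-deletion saturation: independent sets avoiding both neighbourhoods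
  have hWG : ∀ x y : V, G.Adj x y → ∃ W : Finset V, W.card = t - 2 ∧ DSProof.Indep G W ∧
      ∀ w ∈ W, ¬ G.Adj x w ∧ ¬ G.Adj y w ∧ w ≠ x ∧ w ≠ y := by
    intro x y hxy
    have hdel' := hdel x y hxy
    have hT : ∃ T : Finset V, ((G.deleteEdges {s(x, y)})ᶜ.IsNClique t T) := by
      by_contra hno
      push_neg at hno
      exact hdel' hno
    obtain ⟨T, hT⟩ := hT
    have hTadj : ∀ ⦃p⦄, p ∈ T → ∀ ⦃q⦄, q ∈ T → p ≠ q → ¬ G.Adj p q ∨ s(p, q) = s(x, y) := by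
      intro p hp q hq hpq
      have h := hT.1 (Finset.mem_coe.mpr hp) (Finset.mem_coe.mpr hq) hpq
      rw [SimpleGraph.compl_adj, SimpleGraph.deleteEdges_adj] at h
      have h2 := h.2
      by_cases hmem : s(p, q) ∈ ({s(x, y)} : Set (Sym2 V))
      · right; exact Set.mem_singleton_iff.mp hmem
      · left; intro hadj; exact h2 ⟨hadj, hmem⟩
    have hxT : x ∈ T := by
      by_contra hxT
      refine hKt T ⟨?_, hT.2⟩
      intro p hp q hq hpq
      rw [SimpleGraph.compl_adj]
      refine ⟨hpq, ?_⟩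
      rcases hTadj (Finset.mem_coe.mp hp) (Finset.mem_coe.mp hq) hpq with h | h
      · exact h
      · exfalso
        rw [Sym2.eq_iff] at h
        rcases h with ⟨rfl, rfl⟩ | ⟨rfl, rfl⟩
        · exact hxT (Finset.mem_coe.mp hp)
        · exact hxT (Finset.mem_coe.mp hq)
    have hyT : y ∈ T := by
      by_contra hyT
      refine hKt T ⟨?_, hT.2⟩
      intro p hp q hq hpq
      rw [SimpleGraph.compl_adj]
      refine ⟨hpq, ?_⟩
      rcases hTadj (Finset.mem_coe.mp hp) (Finset.mem_coe.mp hq) hpq with h | h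
      · exact h
      · exfalso
        rw [Sym2.eq_iff] at h
        rcases h with ⟨rfl, rfl⟩ | ⟨rfl, rfl⟩
        · exact hyT (Finset.mem_coe.mp hq)
        · exact hyT (Finset.mem_coe.mp hp)
    have hxyne : x ≠ y := G.ne_of_adj hxy
    refine ⟨(T.erase x).erase y, ?_, ?_, ?_⟩
    · rw [Finset.card_erase_of_mem (Finset.mem_erase.mpr ⟨Ne.symm hxyne, hyT⟩),
        Finset.card_erase_of_mem hxT, hT.2]
      omega
    · intro w hw w' hw' hne hadj
      have hwT : w ∈ T := Finset.mem_of_mem_erase (Finset.mem_of_mem_erase hw)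
      have hwT' : w' ∈ T := Finset.mem_of_mem_erase (Finset.mem_of_mem_erase hw')
      rcases hTadj hwT hwT' hne with h | h
      · exact h hadj
      · rw [Sym2.eq_iff] at h
        rcases h with ⟨h1, -⟩ | ⟨h1, -⟩
        · exact (Finset.ne_of_mem_erase (Finset.mem_of_mem_erase hw)) h1
        · exact (Finset.ne_of_mem_erase hw) h1
    · intro w hw
      have hwT : w ∈ T := Finset.mem_of_mem_erase (Finset.mem_of_mem_erase hw)
      have hwx : w ≠ x := Finset.ne_of_mem_erase (Finset.mem_of_mem_erase hw)
      have hwy : w ≠ y := Finset.ne_of_mem_erase hw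
      refine ⟨?_, ?_, hwx, hwy⟩
      · intro hadj
        rcases hTadj hxT hwT (Ne.symm hwx) with h | h
        · exact h hadj
        · rw [Sym2.eq_iff] at h
          rcases h with ⟨-, h2⟩ | ⟨h1, -⟩
          · exact hwy h2
          · exact hxyne h1
      · intro hadj
        rcases hTadj hyT hwT (Ne.symm hwy) with h | h
        · exact h hadj
        · rw [Sym2.eq_iff] at h
          rcases h with ⟨h1, -⟩ | ⟨-, h2⟩
          · exact hxyne h1.symm
          · exact hwx h2
  -- Extraction from the edge-addition saturation: cliques in the common neighbourhood
  have hCG : ∀ x y : V, x ≠ y → ¬ G.Adj x y → ∃ C : Finset V, C.card = s - 2 ∧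
      (∀ c ∈ C, G.Adj x c ∧ G.Adj y c ∧ c ≠ x ∧ c ≠ y) ∧
      (∀ c ∈ C, ∀ c' ∈ C, c ≠ c' → G.Adj c c') := by
    intro x y hne hnadj
    have hadd' := hadd x y hne hnadj
    have hK : ∃ K : Finset V, ((G ⊔ SimpleGraph.edge x y).IsNClique s K) := by
      by_contra hno
      push_neg at hno
      exact hadd' hno
    obtain ⟨K, hK⟩ := hK
    have hKadj : ∀ ⦃p⦄, p ∈ K → ∀ ⦃q⦄, q ∈ K → p ≠ q →
        G.Adj p q ∨ ((p = x ∧ q = y) ∨ (p = y ∧ q = x)) := by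
      intro p hp q hq hpq
      have h := hK.1 (Finset.mem_coe.mpr hp) (Finset.mem_coe.mpr hq) hpq
      rw [SimpleGraph.sup_adj, SimpleGraph.edge_adj] at h
      rcases h with h | ⟨h, _⟩
      · exact Or.inl h
      · exact Or.inr h
    have hxK : x ∈ K := by
      by_contra hxK
      refine hKs K ⟨?_, hK.2⟩
      intro p hp q hq hpq
      rcases hKadj (Finset.mem_coe.mp hp) (Finset.mem_coe.mp hq) hpq with h | h
      · exact h
      · exfalso
        rcases h with ⟨rfl, rfl⟩ | ⟨rfl, rfl⟩
        · exact hxK (Finset.mem_coe.mp hp)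
        · exact hxK (Finset.mem_coe.mp hq)
    have hyK : y ∈ K := by
      by_contra hyK
      refine hKs K ⟨?_, hK.2⟩
      intro p hp q hq hpq
      rcases hKadj (Finset.mem_coe.mp hp) (Finset.mem_coe.mp hq) hpq with h | h
      · exact h
      · exfalso
        rcases h with ⟨rfl, rfl⟩ | ⟨rfl, rfl⟩
        · exact hyK (Finset.mem_coe.mp hq)
        · exact hyK (Finset.mem_coe.mp hp)
    refine ⟨(K.erase x).erase y, ?_, ?_, ?_⟩
    · rw [Finset.card_erase_of_mem (Finset.mem_erase.mpr ⟨Ne.symm hne, hyK⟩),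
        Finset.card_erase_of_mem hxK, hK.2]
      omega
    · intro c hc
      have hcK : c ∈ K := Finset.mem_of_mem_erase (Finset.mem_of_mem_erase hc)
      have hcx : c ≠ x := Finset.ne_of_mem_erase (Finset.mem_of_mem_erase hc)
      have hcy : c ≠ y := Finset.ne_of_mem_erase hc
      refine ⟨?_, ?_, hcx, hcy⟩
      · rcases hKadj hxK hcK (Ne.symm hcx) with h | h
        · exact h
        · exfalso
          rcases h with ⟨-, h2⟩ | ⟨h1, -⟩
          · exact hcy h2
          · exact hne h1
      · rcases hKadj hyK hcK (Ne.symm hcy) with h | h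
        · exact h
        · exfalso
          rcases h with ⟨h1, -⟩ | ⟨-, h2⟩
          · exact hne h1.symm
          · exact hcx h2
    · intro c hc c' hc' hne'
      have hcK : c ∈ K := Finset.mem_of_mem_erase (Finset.mem_of_mem_erase hc)
      have hcK' : c' ∈ K := Finset.mem_of_mem_erase (Finset.mem_of_mem_erase hc')
      rcases hKadj hcK hcK' hne' with h | h
      · exact h
      · exfalso
        rcases h with ⟨h1, -⟩ | ⟨h1, -⟩
        · exact (Finset.ne_of_mem_erase (Finset.mem_of_mem_erase hc)) h1
        · exact (Finset.ne_of_mem_erase hc) h1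
  -- single common neighbour version
  have hCG1 : ∀ x y : V, x ≠ y → ¬ G.Adj x y → ∃ c, G.Adj x c ∧ G.Adj y c := by
    intro x y h1 h2
    obtain ⟨C, hc1, hc2, _⟩ := hCG x y h1 h2
    have hCne : C.Nonempty := by
      rw [← Finset.card_pos, hc1]
      omega
    obtain ⟨c, hc⟩ := hCne
    exact ⟨c, (hc2 c hc).1, (hc2 c hc).2.1⟩
  -- single common non-neighbour version (for the complement)
  have hCGc1 : ∀ x y : V, x ≠ y → ¬ Gᶜ.Adj x y → ∃ c, Gᶜ.Adj x c ∧ Gᶜ.Adj y c := by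
    intro x y h1 h2
    rw [SimpleGraph.compl_adj] at h2
    push_neg at h2
    have hadj : G.Adj x y := h2 h1
    obtain ⟨W, hw1, _, hw3⟩ := hWG x y hadj
    have hWne : W.Nonempty := by
      rw [← Finset.card_pos, hw1]
      omega
    obtain ⟨w, hw⟩ := hWne
    obtain ⟨ha, hb, hc, hd⟩ := hw3 w hw
    exact ⟨w, (SimpleGraph.compl_adj G x w).mpr ⟨Ne.symm hc, ha⟩, (SimpleGraph.compl_adj G y w).mpr ⟨Ne.symm hd, hb⟩⟩
  -- the complement version of hWG
  have hWGc : ∀ x y : V, Gᶜ.Adj x y → ∃ W : Finset V, W.card = s - 2 ∧ DSProof.Indep Gᶜ W ∧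
      ∀ w ∈ W, ¬ Gᶜ.Adj x w ∧ ¬ Gᶜ.Adj y w ∧ w ≠ x ∧ w ≠ y := by
    intro x y hxy
    rw [SimpleGraph.compl_adj] at hxy
    obtain ⟨C, h1, h2, h3⟩ := hCG x y hxy.1 hxy.2
    refine ⟨C, h1, ?_, ?_⟩
    · intro c hc c' hc' hne hadjc
      rw [SimpleGraph.compl_adj] at hadjc
      exact hadjc.2 (h3 c hc c' hc' hne)
    · intro w hw
      obtain ⟨ha, hb, hc, hd⟩ := h2 w hw
      refine ⟨?_, ?_, hc, hd⟩
      · intro hadjc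
        rw [SimpleGraph.compl_adj] at hadjc
        exact hadjc.2 ha
      · intro hadjc
        rw [SimpleGraph.compl_adj] at hadjc
        exact hadjc.2 hb
  -- independence bounds
  have hBG : ∀ (v : V) (S : Finset V), DSProof.Indep G S →
      (∀ w ∈ S, ¬ G.Adj v w ∧ w ≠ v) → S.card ≤ t - 2 := by
    intro v S hind hmem
    by_contra hcard
    push_neg at hcard
    obtain ⟨S₀, hsub, hS₀⟩ := Finset.exists_subset_card_eq (show t - 1 ≤ S.card by omega)
    have hvS₀ : v ∉ S₀ := fun hv => (hmem v (hsub hv)).2 rfl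
    refine hKt (insert v S₀) ⟨?_, ?_⟩
    · intro p hp q hq hpq
      rw [SimpleGraph.compl_adj]
      refine ⟨hpq, ?_⟩
      rcases Finset.mem_insert.mp (Finset.mem_coe.mp hp) with rfl | hp' <;>
        rcases Finset.mem_insert.mp (Finset.mem_coe.mp hq) with h | hq'
      · exact absurd h.symm hpq
      · exact (hmem q (hsub hq')).1
      · subst h
        intro hadj
        exact (hmem p (hsub hp')).1 hadj.symm
      · exact hind (hsub hp') (hsub hq') hpq
    · rw [Finset.card_insert_of_notMem hvS₀, hS₀]
      omega
  have hBGc : ∀ (v : V) (S : Finset V), DSProof.Indep Gᶜ S →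
      (∀ w ∈ S, ¬ Gᶜ.Adj v w ∧ w ≠ v) → S.card ≤ s - 2 := by
    intro v S hind hmem
    by_contra hcard
    push_neg at hcard
    obtain ⟨S₀, hsub, hS₀⟩ := Finset.exists_subset_card_eq (show s - 1 ≤ S.card by omega)
    have hvS₀ : v ∉ S₀ := fun hv => (hmem v (hsub hv)).2 rfl
    refine hKs (insert v S₀) ⟨?_, ?_⟩
    · intro p hp q hq hpq
      rcases Finset.mem_insert.mp (Finset.mem_coe.mp hp) with rfl | hp' <;>
        rcases Finset.mem_insert.mp (Finset.mem_coe.mp hq) with h | hq'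
      · exact absurd h.symm hpq
      · -- p = v, q ∈ S₀ : ¬ Gᶜ.Adj v q means G.Adj v q (since v ≠ q)
        have h1 := (hmem q (hsub hq')).1
        rw [SimpleGraph.compl_adj] at h1
        push_neg at h1
        exact h1 hpq
      · subst h
        have h1 := (hmem p (hsub hp')).1
        rw [SimpleGraph.compl_adj] at h1
        push_neg at h1
        exact (h1 (Ne.symm hpq)).symm
      · have h1 := hind (hsub hp') (hsub hq') hpq
        rw [SimpleGraph.compl_adj] at h1
        push_neg at h1
        exact h1 hpq
    · rw [Finset.card_insert_of_notMem hvS₀, hS₀]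
      omega
  -- pick a vertex
  set v : V := x₀ with hvdef
  -- v has a neighbour
  have hdG : ∃ u, G.Adj v u := by
    by_contra h
    push_neg at h
    obtain ⟨c, hc, _⟩ := hCG1 v y₀ hx₀y₀ (h y₀)
    exact h c hc
  -- v has a non-neighbour (a neighbour in the complement)
  have hdGc : ∃ u, Gᶜ.Adj v u := by
    by_contra h
    push_neg at h
    obtain ⟨c, hc, _⟩ := hCGc1 v y₀ hx₀y₀ (h y₀)
    exact h c hc
  set M1 : Finset V := Finset.univ.filter (fun w => ¬ G.Adj v w ∧ w ≠ v) with hM1def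
  set M2 : Finset V := Finset.univ.filter (fun w => ¬ Gᶜ.Adj v w ∧ w ≠ v) with hM2def
  have hM1 : ∀ w, w ∈ M1 ↔ (¬ G.Adj v w ∧ w ≠ v) := by
    intro w
    rw [hM1def, Finset.mem_filter]
    simp
  have hM2 : ∀ w, w ∈ M2 ↔ (¬ Gᶜ.Adj v w ∧ w ≠ v) := by
    intro w
    rw [hM2def, Finset.mem_filter]
    simp
  have h1 := DSProof.codeg_bound G (t - 2) v hWG hCG1 (hBG v) hdG M1 hM1
  have h2 := DSProof.codeg_bound Gᶜ (s - 2) v hWGc hCGc1 (hBGc v) hdGc M2 hM2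
  have hdisj : Disjoint M1 M2 := by
    rw [Finset.disjoint_left]
    intro w hw1 hw2
    obtain ⟨ha1, ha2⟩ := (hM1 w).mp hw1
    obtain ⟨hb1, _⟩ := (hM2 w).mp hw2
    rw [SimpleGraph.compl_adj] at hb1
    push_neg at hb1
    exact ha1 (hb1 (Ne.symm ha2))
  have hvnot : v ∉ M1 ∪ M2 := by
    intro hv
    rcases Finset.mem_union.mp hv with hv' | hv'
    · exact ((hM1 v).mp hv').2 rfl
    · exact ((hM2 v).mp hv').2 rfl
  have hcards : (insert v (M1 ∪ M2)).card ≤ Fintype.card V := by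
    rw [← Finset.card_univ]
    exact Finset.card_le_card (Finset.subset_univ _)
  rw [Finset.card_insert_of_notMem hvnot, Finset.card_union_of_disjoint hdisj] at hcards
  omega
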